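/- For a d-dimensional board of size n₁ × n₂ × … × n_d, the maximum achievable tile value is 2^((∏ᵢ nᵢ) + 1): this exponent is reachable and no larger exponent is reachable, given ∏ᵢ nᵢ ≥ 2. -/

import Mathlib

/-- Abstract 2048 model: states are multisets of exponents on a board with `N` cells. -/
inductive Reachable (N : ℕ) : Multiset ℕ → Prop
  | empty : Reachable N 0
  | insert1 {M : Multiset ℕ} : Reachable N M → Multiset.card M < N →
      Reachable N (1 ::ₘ M)
  | insert2 {M : Multiset ℕ} : Reachable N M → Multiset.card M < N →
      Reachable N (2 ::ₘ M)
  | merge {M : Multiset ℕ} {k : ℕ} : Reachable N (k ::ₘ k ::ₘ M) →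
      Reachable N ((k + 1) ::ₘ M)

lemma build (N : ℕ) : ∀ j, 1 ≤ j → ∀ M : Multiset ℕ, Reachable N M →
    Multiset.card M + j ≤ N → Reachable N ((j + 1) ::ₘ M) := by
  intro j
  induction j with
  | zero => omega
  | succ j ih =>
    intro hj M hM hcard
    rcases Nat.lt_or_ge 1 (j + 1) with h1 | h1
    · have h2 : Reachable N ((j + 1) ::ₘ M) := ih (by omega) M hM (by omega)
      have h3 : Reachable N ((j + 1) ::ₘ (j + 1) ::ₘ M) :=
        ih (by omega) _ h2 (by simp; omega)
      exact Reachable.merge h3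
    · have hj0 : j = 0 := by omega
      subst hj0
      exact Reachable.insert2 hM (by omega)

lemma inv_of_reachable {N : ℕ} {M : Multiset ℕ} (h : Reachable N M) :
    Multiset.card M ≤ N ∧ (∀ x ∈ M, 1 ≤ x) ∧
    ∀ t, 2 ≤ t → (M.filter (fun k => t ≤ k)).card ≤ N + 2 - t := by
  induction h with
  | empty => exact ⟨by simp, by simp, fun t ht => by simp⟩
  | @insert1 M hM hc ih =>
    obtain ⟨ih1, ih2, ih3⟩ := ih
    refine ⟨by simpa using hc, ?_, ?_⟩
    · intro x hx
      rcases Multiset.mem_cons.mp hx with rfl | hx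
      · exact le_refl 1
      · exact ih2 x hx
    · intro t ht
      rw [Multiset.filter_cons_of_neg (p := fun k => t ≤ k) _ (by omega)]
      exact ih3 t ht
  | @insert2 M hM hc ih =>
    obtain ⟨ih1, ih2, ih3⟩ := ih
    refine ⟨by simpa using hc, ?_, ?_⟩
    · intro x hx
      rcases Multiset.mem_cons.mp hx with rfl | hx
      · omega
      · exact ih2 x hx
    · intro t ht
      by_cases h2 : t ≤ 2
      · rw [Multiset.filter_cons_of_pos (p := fun k => t ≤ k) _ h2, Multiset.card_cons]
        have : (M.filter (fun k => t ≤ k)).card ≤ Multiset.card M :=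
          Multiset.card_le_card (Multiset.filter_le _ M)
        omega
      · rw [Multiset.filter_cons_of_neg (p := fun k => t ≤ k) _ h2]
        exact ih3 t ht
  | @merge M k hM ih =>
    obtain ⟨ih1, ih2, ih3⟩ := ih
    have hk1 : 1 ≤ k := ih2 k (Multiset.mem_cons_self _ _)
    have hcard : Multiset.card M + 2 ≤ N := by
      simp at ih1; omega
    refine ⟨by simp; omega, ?_, ?_⟩
    · intro x hx
      rcases Multiset.mem_cons.mp hx with rfl | hx
      · omega
      · exact ih2 x (by simp [hx])
    · intro t ht
      have mono : ∀ s u : ℕ, s ≤ u →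
          (M.filter (fun k => u ≤ k)).card ≤ (M.filter (fun k => s ≤ k)).card := by
        intro s u hsu
        apply Multiset.card_le_card
        apply Multiset.monotone_filter_right
        intro x hx
        omega
      by_cases h1 : t ≤ k
      · have old := ih3 t ht
        rw [Multiset.filter_cons_of_pos (p := fun k => t ≤ k) _ h1,
          Multiset.filter_cons_of_pos (p := fun k => t ≤ k) _ h1,
          Multiset.card_cons, Multiset.card_cons] at old
        rw [Multiset.filter_cons_of_pos (p := fun k => t ≤ k) _ (by omega : t ≤ k + 1),
          Multiset.card_cons]
        omega
      · by_cases h2 : t = k + 1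
        · subst h2
          rw [Multiset.filter_cons_of_pos (p := fun m => k + 1 ≤ m) _ (le_refl (k + 1)),
            Multiset.card_cons]
          by_cases hk2 : 2 ≤ k
          · have old := ih3 k hk2
            rw [Multiset.filter_cons_of_pos (p := fun m => k ≤ m) _ (le_refl k),
              Multiset.filter_cons_of_pos (p := fun m => k ≤ m) _ (le_refl k),
              Multiset.card_cons, Multiset.card_cons] at old
            have hmono := mono k (k + 1) (by omega)
            omega
          · have hk : k = 1 := by omega
            subst hk
            have : (M.filter (fun m => 1 + 1 ≤ m)).card ≤ Multiset.card M :=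
              Multiset.card_le_card (Multiset.filter_le _ M)
            omega
        · have old := ih3 t ht
          rw [Multiset.filter_cons_of_neg (p := fun k => t ≤ k) _ (by omega),
            Multiset.filter_cons_of_neg (p := fun k => t ≤ k) _ (by omega)] at old
          rw [Multiset.filter_cons_of_neg (p := fun k => t ≤ k) _ (by omega)]
          exact old

/-- On a `d`-dimensional board of size `n₁ × ⋯ × n_d` with `N = ∏ᵢ nᵢ ≥ 2`
cells, the maximum achievable tile value is `2 ^ (N + 1)`: exponent `N + 1`
is reachable and exponent `N + 2` is not. -/
theorem d_dimensional_max_value (d : ℕ) (n : Fin d → ℕ)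
    (h : 2 ≤ ∏ i, n i) :
    (∃ M : Multiset ℕ, Reachable (∏ i, n i) M ∧ (∏ i, n i) + 1 ∈ M) ∧
    (∀ M : Multiset ℕ, Reachable (∏ i, n i) M → (∏ i, n i) + 2 ∉ M) := by
  set N := ∏ i, n i with hN
  constructor
  · refine ⟨{N + 1}, ?_, by simp⟩
    have := build N N (by omega) 0 Reachable.empty (by simp)
    simpa using this
  · intro M hM hmem
    obtain ⟨-, -, h3⟩ := inv_of_reachable hM
    have hb := h3 (N + 2) (by omega)
    have hpos : 1 ≤ (M.filter (fun k => N + 2 ≤ k)).card := by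
      rw [Nat.one_le_iff_ne_zero, Ne, Multiset.card_eq_zero]
      intro hf
      have : N + 2 ∈ M.filter (fun k => N + 2 ≤ k) :=
        Multiset.mem_filter.mpr ⟨hmem, le_refl _⟩
      simp [hf] at this
    omega
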